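/- Let S₁ ∗ S₂ be the semigroup free product with automatic structure (A, L), and let B = {a ∈ A : a represents an element of S₁}. Then (B, L ∩ B⁺) is an automatic structure for S₁. -/

import Mathlib

namespace AutoSg

/-- Evaluation of a nonempty word over alphabet `A` in a semigroup `S`
via the letter-interpretation map `ψ`; the empty word evaluates to `none`. -/
def evalWord {S : Type*} [Semigroup S] {A : Type*} (ψ : A → S) : List A → Option S
  | [] => none
  | a :: w => some ((w.map ψ).foldl (· * ·) (ψ a))

/-- The standard padding map `δ_A` on pairs of words, with `none` playing
the role of the padding symbol `$`. -/
def padMap {A : Type*} (u v : List A) : List (Option A × Option A) :=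
  List.zipWith Prod.mk (u.map some ++ List.replicate (v.length - u.length) none)
    (v.map some ++ List.replicate (u.length - v.length) none)

/-- `(A, L)` is an automatic structure for the semigroup `S` with respect to `ψ`. -/
structure IsAutomaticStructure (S : Type*) [Semigroup S] {A : Type*} [Finite A]
    (ψ : A → S) (L : Language A) : Prop where
  nonempty_words : ∀ w ∈ L, w ≠ []
  regular : L.IsRegular
  onto : ∀ s : S, ∃ w ∈ L, evalWord ψ w = some s
  eq_regular : Language.IsRegular
    {p : List (Option A × Option A) |
      ∃ u ∈ L, ∃ v ∈ L, p = padMap u v ∧ evalWord ψ u = evalWord ψ v}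
  mul_regular : ∀ a : A, Language.IsRegular
    {p : List (Option A × Option A) |
      ∃ u ∈ L, ∃ v ∈ L, p = padMap u v ∧ evalWord ψ (u ++ [a]) = evalWord ψ v}

/-- An automatic structure with uniqueness: each element of `S` is represented
by exactly one word of `L`. -/
structure IsAutomaticStructureWithUniqueness (S : Type*) [Semigroup S] {A : Type*} [Finite A]
    (ψ : A → S) (L : Language A) extends IsAutomaticStructure S ψ L : Prop where
  unique : ∀ u ∈ L, ∀ v ∈ L, evalWord ψ u = evalWord ψ v → u = v

/-- A semigroup is automatic if it admits an automatic structure. -/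
def IsAutomaticSemigroup (S : Type*) [Semigroup S] : Prop :=
  ∃ (A : Type) (_ : Finite A) (ψ : A → S) (L : Language A), IsAutomaticStructure S ψ L



/-- The defining relations of the semigroup free product `S₁ ∗ S₂`:
multiply two adjacent letters coming from the same factor. -/
def freeProductRel (S₁ S₂ : Type*) [Semigroup S₁] [Semigroup S₂]
    (x y : FreeSemigroup (S₁ ⊕ S₂)) : Prop :=
  (∃ a b : S₁, x = FreeSemigroup.of (Sum.inl a) * FreeSemigroup.of (Sum.inl b) ∧
      y = FreeSemigroup.of (Sum.inl (a * b))) ∨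
  (∃ a b : S₂, x = FreeSemigroup.of (Sum.inr a) * FreeSemigroup.of (Sum.inr b) ∧
      y = FreeSemigroup.of (Sum.inr (a * b)))

/-- The congruence on the free semigroup on `S₁ ⊕ S₂` generated by the defining
relations of the free product. -/
def freeProductCon (S₁ S₂ : Type*) [Semigroup S₁] [Semigroup S₂] :
    Con (FreeSemigroup (S₁ ⊕ S₂)) :=
  conGen (freeProductRel S₁ S₂)

/-- The semigroup free product `S₁ ∗ S₂`. -/
def SemigroupFreeProduct (S₁ S₂ : Type*) [Semigroup S₁] [Semigroup S₂] :=
  (freeProductCon S₁ S₂).Quotient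

instance (S₁ S₂ : Type*) [Semigroup S₁] [Semigroup S₂] :
    Semigroup (SemigroupFreeProduct S₁ S₂) :=
  Con.semigroup _

/-- The canonical map `S₁ → S₁ ∗ S₂`. -/
def fpInl (S₁ S₂ : Type*) [Semigroup S₁] [Semigroup S₂] (s : S₁) :
    SemigroupFreeProduct S₁ S₂ :=
  ((FreeSemigroup.of (Sum.inl s) : FreeSemigroup (S₁ ⊕ S₂)) : (freeProductCon S₁ S₂).Quotient)

/-- The canonical map `S₂ → S₁ ∗ S₂`. -/
def fpInr (S₁ S₂ : Type*) [Semigroup S₁] [Semigroup S₂] (s : S₂) :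
    SemigroupFreeProduct S₁ S₂ :=
  ((FreeSemigroup.of (Sum.inr s) : FreeSemigroup (S₁ ⊕ S₂)) : (freeProductCon S₁ S₂).Quotient)

/-- The image of `S₁` in the free product, as a subsemigroup. -/
def fpLeftFactor (S₁ S₂ : Type*) [Semigroup S₁] [Semigroup S₂] :
    Subsemigroup (SemigroupFreeProduct S₁ S₂) where
  carrier := Set.range (fpInl S₁ S₂)
  mul_mem' := by
    rintro _ _ ⟨a, rfl⟩ ⟨b, rfl⟩
    refine ⟨a * b, ?_⟩
    have h : (freeProductCon S₁ S₂)
        (FreeSemigroup.of (Sum.inl a) * FreeSemigroup.of (Sum.inl b))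
        (FreeSemigroup.of (Sum.inl (a * b))) :=
      ConGen.Rel.of _ _ (Or.inl ⟨a, b, rfl, rfl⟩)
    have := (Con.eq (freeProductCon S₁ S₂)).2 h
    exact this.symm


end AutoSg

namespace AutoSg

/- ===== Auxiliary development ===== -/

/-- Small "type" semigroup recording (first factor, last factor, length ≥ 2). -/
structure Typ where
  f : Bool
  l : Bool
  c : Bool
deriving DecidableEq

instance : Mul Typ := ⟨fun x y => ⟨x.f, y.l, x.c || y.c || (x.l != y.f)⟩⟩

lemma Typ.mul_def (x y : Typ) : x * y = ⟨x.f, y.l, x.c || y.c || (x.l != y.f)⟩ := rfl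

instance : Semigroup Typ where
  mul_assoc a b c := by
    obtain ⟨f1, l1, c1⟩ := a; obtain ⟨f2, l2, c2⟩ := b; obtain ⟨f3, l3, c3⟩ := c
    cases f1 <;> cases l1 <;> cases c1 <;> cases f2 <;> cases l2 <;> cases c2 <;>
      cases f3 <;> cases l3 <;> cases c3 <;> decide

def Typ.zero : Typ := ⟨false, false, false⟩

def Typ.valid (t : Typ) : Prop := t.c = false → t.f = t.l

lemma Typ.valid_mul {x y : Typ} (hx : x.valid) (hy : y.valid) : (x * y).valid := by
  intro h
  rw [Typ.mul_def] at h ⊢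
  simp only [Bool.or_eq_false_iff, bne_eq_false_iff_eq] at h
  obtain ⟨⟨hc1, hc2⟩, hlf⟩ := h
  simp only [hx hc1, hlf, hy hc2]

lemma Typ.mul_eq_zero {x y : Typ} (hx : x.valid) (hy : y.valid) (h : x * y = Typ.zero) :
    x = Typ.zero ∧ y = Typ.zero := by
  rw [Typ.mul_def, Typ.zero, Typ.mk.injEq] at h
  obtain ⟨hf, hl, hc⟩ := h
  simp only [Bool.or_eq_false_iff, bne_eq_false_iff_eq] at hc
  obtain ⟨⟨hc1, hc2⟩, hlf⟩ := hc
  have h1 : x.l = false := (hx hc1).symm.trans hf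
  have h2 : y.f = false := by rw [← hlf, h1]
  obtain ⟨_, _, _⟩ := x; obtain ⟨_, _, _⟩ := y
  simp_all [Typ.zero]

lemma Typ.foldl_eq_zero : ∀ (ts : List Typ) (t : Typ), t.valid → (∀ t' ∈ ts, t'.valid) →
    ts.foldl (· * ·) t = Typ.zero → t = Typ.zero ∧ ∀ t' ∈ ts, t' = Typ.zero
  | [], t, _, _, h => ⟨h, by simp⟩
  | t₂ :: rest, t, hv, hvs, h => by
    have hv2 : t₂.valid := hvs t₂ (by simp)
    have hrest : ∀ t' ∈ rest, t'.valid := fun t' ht' => hvs t' (by simp [ht'])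
    obtain ⟨h12, hr⟩ := Typ.foldl_eq_zero rest (t * t₂) (Typ.valid_mul hv hv2) hrest h
    obtain ⟨h1, h2⟩ := Typ.mul_eq_zero hv hv2 h12
    refine ⟨h1, fun t' ht' => ?_⟩
    rcases List.mem_cons.1 ht' with rfl | ht'
    · exact h2
    · exact hr t' ht'

variable {S₁ S₂ : Type*} [Semigroup S₁] [Semigroup S₂]

def typLetter : S₁ ⊕ S₂ → Typ
  | .inl _ => ⟨false, false, false⟩
  | .inr _ => ⟨true, true, false⟩

lemma freeProductCon_le_mulKer :
    freeProductCon S₁ S₂ ≤ Con.ker (FreeSemigroup.lift (typLetter (S₁ := S₁) (S₂ := S₂))) := by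
  apply Con.conGen_le.mpr
  rintro x y (⟨a, b, rfl, rfl⟩ | ⟨a, b, rfl, rfl⟩) <;>
  · show FreeSemigroup.lift typLetter _ = FreeSemigroup.lift typLetter _
    simp [map_mul, FreeSemigroup.lift_of, typLetter, Typ.mul_def]

/-- Type map on the free product. -/
def typOf (x : SemigroupFreeProduct S₁ S₂) : Typ :=
  Con.liftOn x (FreeSemigroup.lift typLetter) (fun _ _ h => freeProductCon_le_mulKer h)

lemma typOf_coe (z : FreeSemigroup (S₁ ⊕ S₂)) :
    typOf (S₁ := S₁) (S₂ := S₂) (z : (freeProductCon S₁ S₂).Quotient) =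
      FreeSemigroup.lift typLetter z := rfl

lemma typOf_mul (x y : SemigroupFreeProduct S₁ S₂) : typOf (x * y) = typOf x * typOf y := by
  induction x using Con.induction_on with
  | _ a =>
    induction y using Con.induction_on with
    | _ b =>
      show typOf ((a * b : FreeSemigroup (S₁ ⊕ S₂)) : (freeProductCon S₁ S₂).Quotient) = _
      rw [typOf_coe, typOf_coe, typOf_coe, map_mul]

lemma typOf_fpInl (s : S₁) : typOf (fpInl S₁ S₂ s) = Typ.zero := by
  rw [fpInl, typOf_coe, FreeSemigroup.lift_of]; rfl

def goodSet : Subsemigroup (SemigroupFreeProduct S₁ S₂) where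
  carrier := {x | (typOf x).valid ∧ (typOf x = Typ.zero → x ∈ fpLeftFactor S₁ S₂)}
  mul_mem' := by
    rintro x y ⟨hxv, hx0⟩ ⟨hyv, hy0⟩
    refine ⟨by rw [typOf_mul]; exact Typ.valid_mul hxv hyv, ?_⟩
    intro h
    rw [typOf_mul] at h
    obtain ⟨h1, h2⟩ := Typ.mul_eq_zero hxv hyv h
    exact (fpLeftFactor S₁ S₂).mul_mem (hx0 h1) (hy0 h2)

lemma mem_goodSet (x : SemigroupFreeProduct S₁ S₂) : x ∈ goodSet := by
  refine Con.induction_on x (fun z => ?_)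
  refine FreeSemigroup.recOnMul z (fun s => ?_) (fun s y hs hy => ?_)
  case _ =>
      cases s with
      | inl a =>
        refine ⟨?_, fun _ => ⟨a, rfl⟩⟩
        rw [show ((FreeSemigroup.of (Sum.inl a) : FreeSemigroup (S₁ ⊕ S₂)) :
            (freeProductCon S₁ S₂).Quotient) = fpInl S₁ S₂ a from rfl, typOf_fpInl]
        intro _; rfl
      | inr b =>
        constructor
        · rw [typOf_coe, FreeSemigroup.lift_of]
          intro _; rfl
        · rw [typOf_coe, FreeSemigroup.lift_of]
          intro h
          simp [typLetter, Typ.zero, Typ.mk.injEq] at h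
  case _ =>
      rw [Con.coe_mul]
      exact goodSet.mul_mem hs hy

lemma typOf_valid (x : SemigroupFreeProduct S₁ S₂) : (typOf x).valid := (mem_goodSet x).1

lemma mem_fpLeftFactor_of_typOf {x : SemigroupFreeProduct S₁ S₂} (h : typOf x = Typ.zero) :
    x ∈ fpLeftFactor S₁ S₂ := (mem_goodSet x).2 h

lemma typOf_of_mem {x : SemigroupFreeProduct S₁ S₂} (h : x ∈ fpLeftFactor S₁ S₂) :
    typOf x = Typ.zero := by
  obtain ⟨s, rfl⟩ := h
  exact typOf_fpInl s

/-- A function commuting with multiplication commutes with `foldl (· * ·)`. -/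
lemma foldl_hom' {S T : Type*} [Mul S] [Mul T] (f : S → T)
    (hf : ∀ x y : S, f (x * y) = f x * f y) :
    ∀ (l : List S) (x : S), f (l.foldl (· * ·) x) = (l.map f).foldl (· * ·) (f x)
  | [], x => rfl
  | a :: l, x => by
    simp only [List.foldl_cons, List.map_cons, ← hf]
    exact foldl_hom' f hf l (x * a)

/-- The key lemma: if a word evaluates into the left factor, all its letters do. -/
lemma letters_mem {A : Type*} {ψ : A → SemigroupFreeProduct S₁ S₂} {w : List A}
    {x : SemigroupFreeProduct S₁ S₂} (h : evalWord ψ w = some x)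
    (hx : x ∈ fpLeftFactor S₁ S₂) : ∀ a ∈ w, ψ a ∈ fpLeftFactor S₁ S₂ := by
  match w with
  | [] => simp [evalWord] at h
  | a :: rest =>
    simp only [evalWord, Option.some_inj] at h
    have hx0 : typOf x = Typ.zero := typOf_of_mem hx
    rw [← h, foldl_hom' typOf typOf_mul, List.map_map] at hx0
    obtain ⟨h1, h2⟩ := Typ.foldl_eq_zero _ _ (typOf_valid _)
      (fun t' ht' => by
        obtain ⟨b, _, rfl⟩ := List.mem_map.1 ht'
        exact typOf_valid _) hx0
    intro b hb
    rcases List.mem_cons.1 hb with rfl | hb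
    · exact mem_fpLeftFactor_of_typOf h1
    · exact mem_fpLeftFactor_of_typOf (h2 _ (List.mem_map.2 ⟨b, hb, rfl⟩))


section Reg

variable {A B : Type*}

lemma isRegular_comap (g : B → A) {L : Language A} (h : L.IsRegular) :
    Language.IsRegular {w : List B | w.map g ∈ L} := by
  obtain ⟨σ, x, M, rfl⟩ := h
  refine ⟨σ, x, ⟨fun s b => M.step s (g b), M.start, M.accept⟩, ?_⟩
  ext w
  show _ ∈ _ ↔ _
  simp only [DFA.mem_accepts, DFA.eval, DFA.evalFrom, List.foldl_map, Set.mem_setOf_eq]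
  exact Iff.rfl

lemma padMap_eq_zip (u v : List A) :
    padMap u v = (u.map some ++ List.replicate (v.length - u.length) none).zip
      (v.map some ++ List.replicate (u.length - v.length) none) := rfl

lemma map_fst_padMap (u v : List A) :
    (padMap u v).map Prod.fst = u.map some ++ List.replicate (v.length - u.length) none := by
  rw [padMap_eq_zip]
  refine List.map_fst_zip ?_
  simp only [List.length_append, List.length_map, List.length_replicate]
  omega

lemma map_snd_padMap (u v : List A) :
    (padMap u v).map Prod.snd = v.map some ++ List.replicate (u.length - v.length) none := by
  rw [padMap_eq_zip]
  refine List.map_snd_zip ?_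
  simp only [List.length_append, List.length_map, List.length_replicate]
  omega

lemma padMap_map (g : B → A) (u v : List B) :
    padMap (u.map g) (v.map g)
      = (padMap u v).map (Prod.map (Option.map g) (Option.map g)) := by
  have h1 : ∀ w w' : List B, (w.map g).map some ++
      List.replicate ((w'.map g).length - (w.map g).length) none
      = (w.map some ++ List.replicate (w'.length - w.length) none).map (Option.map g) := by
    intro w w'
    simp only [List.map_append, List.map_map, List.map_replicate, List.length_map]
    rfl
  simp only [padMap, h1, List.zipWith_map, List.map_zipWith]
  rfl

lemma exists_map_eq {val : B → A} {u : List A} (h : ∀ a ∈ u, ∃ b, val b = a) :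
    ∃ u' : List B, u'.map val = u := by
  induction u with
  | nil => exact ⟨[], rfl⟩
  | cons a u ih =>
    obtain ⟨b, hb⟩ := h a (List.mem_cons_self)
    obtain ⟨u', hu'⟩ := ih (fun x hx => h x (List.mem_cons_of_mem _ hx))
    exact ⟨b :: u', by simp [hb, hu']⟩

lemma letters_range_fst {val : B → A} {p : List (Option B × Option B)} {u v : List A}
    (hp : p.map (Prod.map (Option.map val) (Option.map val)) = padMap u v) :
    ∀ a ∈ u, ∃ b, val b = a := by
  intro a ha
  have h1 : some a ∈ (padMap u v).map Prod.fst := by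
    rw [map_fst_padMap]
    exact List.mem_append_left _ (List.mem_map_of_mem (f := some) ha)
  rw [← hp, List.map_map] at h1
  obtain ⟨q, _, hq⟩ := List.mem_map.1 h1
  obtain ⟨b, _, hb⟩ := Option.map_eq_some_iff.1 hq
  exact ⟨b, hb⟩

lemma letters_range_snd {val : B → A} {p : List (Option B × Option B)} {u v : List A}
    (hp : p.map (Prod.map (Option.map val) (Option.map val)) = padMap u v) :
    ∀ a ∈ v, ∃ b, val b = a := by
  intro a ha
  have h1 : some a ∈ (padMap u v).map Prod.snd := by
    rw [map_snd_padMap]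
    exact List.mem_append_left _ (List.mem_map_of_mem (f := some) ha)
  rw [← hp, List.map_map] at h1
  obtain ⟨q, _, hq⟩ := List.mem_map.1 h1
  obtain ⟨b, _, hb⟩ := Option.map_eq_some_iff.1 hq
  exact ⟨b, hb⟩

end Reg

section Eval

variable {S₁ S₂ : Type*} [Semigroup S₁] [Semigroup S₂] {A : Type*}
  (ψ : A → SemigroupFreeProduct S₁ S₂)

lemma evalWord_map_val (w : List {a : A // ψ a ∈ fpLeftFactor S₁ S₂}) :
    evalWord ψ (w.map Subtype.val) = Option.map Subtype.val
      (evalWord (fun b : {a : A // ψ a ∈ fpLeftFactor S₁ S₂} =>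
        (⟨ψ b.1, b.2⟩ : fpLeftFactor S₁ S₂)) w) := by
  match w with
  | [] => rfl
  | b :: rest =>
    simp only [evalWord, List.map_cons, Option.map_some]
    congr 1
    rw [foldl_hom' (Subtype.val : fpLeftFactor S₁ S₂ → SemigroupFreeProduct S₁ S₂)
      (fun x y => rfl)]
    simp only [List.map_map]
    rfl

end Eval

lemma map_val_pmap {A : Type*} {P : A → Prop} : ∀ (l : List A) (H : ∀ a ∈ l, P a),
    (l.pmap (fun a h => (⟨a, h⟩ : {a // P a})) H).map Subtype.val = l
  | [], _ => rfl
  | a :: l, H => by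
    simp only [List.pmap, List.map_cons, map_val_pmap l _]

end AutoSg

open AutoSg in
/-- If `(A, L)` is an automatic structure for the free product `S₁ ∗ S₂` and
`B = {a ∈ A : a represents an element of S₁}`, then `(B, L ∩ B⁺)` is an automatic
structure for `S₁` (identified with its image in the free product). -/
theorem freeProduct_factor_automatic_structure (S₁ S₂ : Type*) [Semigroup S₁] [Semigroup S₂]
    (A : Type) [Finite A] (ψ : A → SemigroupFreeProduct S₁ S₂) (L : Language A)
    (h : IsAutomaticStructure (SemigroupFreeProduct S₁ S₂) ψ L) :
    IsAutomaticStructure (fpLeftFactor S₁ S₂)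
      (fun b : {a : A // ψ a ∈ fpLeftFactor S₁ S₂} => (⟨ψ b.1, b.2⟩ : fpLeftFactor S₁ S₂))
      {w : List {a : A // ψ a ∈ fpLeftFactor S₁ S₂} | w.map Subtype.val ∈ L} := by
  classical
  have hvalinj : Function.Injective
      (Option.map (Subtype.val : {a : A // ψ a ∈ fpLeftFactor S₁ S₂} → A)) :=
    Option.map_injective Subtype.val_injective
  have hvalinj2 : Function.Injective
      (Option.map (Subtype.val : fpLeftFactor S₁ S₂ → SemigroupFreeProduct S₁ S₂)) :=
    Option.map_injective Subtype.val_injective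
  have hginj : Function.Injective (Prod.map
      (Option.map (Subtype.val : {a : A // ψ a ∈ fpLeftFactor S₁ S₂} → A))
      (Option.map Subtype.val)) :=
    Prod.map_injective.mpr ⟨hvalinj, hvalinj⟩
  refine ⟨?_, ?_, ?_, ?_, ?_⟩
  · -- nonempty_words
    intro w hw heq
    exact h.nonempty_words _ hw (by simp [heq])
  · -- regular
    exact isRegular_comap Subtype.val h.regular
  · -- onto
    rintro ⟨x, hx⟩
    obtain ⟨w, hw, hew⟩ := h.onto x
    have hall : ∀ a ∈ w, ψ a ∈ fpLeftFactor S₁ S₂ := letters_mem hew hx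
    have hmap := map_val_pmap w hall
    refine ⟨w.pmap (fun a ha => (⟨a, ha⟩ : {a : A // ψ a ∈ fpLeftFactor S₁ S₂})) hall, ?_, ?_⟩
    · show _ ∈ L
      rw [hmap]; exact hw
    · have h2 := evalWord_map_val ψ
        (w.pmap (fun a ha => (⟨a, ha⟩ : {a : A // ψ a ∈ fpLeftFactor S₁ S₂})) hall)
      rw [hmap, hew] at h2
      cases he : evalWord (fun b : {a : A // ψ a ∈ fpLeftFactor S₁ S₂} =>
          (⟨ψ b.1, b.2⟩ : fpLeftFactor S₁ S₂))
          (w.pmap (fun a ha => (⟨a, ha⟩ : {a : A // ψ a ∈ fpLeftFactor S₁ S₂})) hall) with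
      | none => rw [he] at h2; simp at h2
      | some s =>
        rw [he] at h2
        simp only [Option.map_some, Option.some_inj] at h2
        exact congrArg some (Subtype.ext h2.symm)
  · -- eq_regular
    have hset : {p : List (Option {a : A // ψ a ∈ fpLeftFactor S₁ S₂} ×
        Option {a : A // ψ a ∈ fpLeftFactor S₁ S₂}) |
        ∃ u ∈ {w : List {a : A // ψ a ∈ fpLeftFactor S₁ S₂} | w.map Subtype.val ∈ L},
        ∃ v ∈ {w : List {a : A // ψ a ∈ fpLeftFactor S₁ S₂} | w.map Subtype.val ∈ L},
          p = padMap u v ∧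
          evalWord (fun b : {a : A // ψ a ∈ fpLeftFactor S₁ S₂} =>
            (⟨ψ b.1, b.2⟩ : fpLeftFactor S₁ S₂)) u =
          evalWord (fun b : {a : A // ψ a ∈ fpLeftFactor S₁ S₂} =>
            (⟨ψ b.1, b.2⟩ : fpLeftFactor S₁ S₂)) v}
        = {p | p.map (Prod.map (Option.map Subtype.val) (Option.map Subtype.val)) ∈
            {q : List (Option A × Option A) | ∃ u ∈ L, ∃ v ∈ L, q = padMap u v ∧
              evalWord ψ u = evalWord ψ v}} := by
      ext p
      constructor
      · rintro ⟨u, hu, v, hv, rfl, he⟩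
        exact ⟨u.map Subtype.val, hu, v.map Subtype.val, hv, (padMap_map _ u v).symm,
          by rw [evalWord_map_val, evalWord_map_val, he]⟩
      · rintro ⟨u, hu, v, hv, hpad, he⟩
        obtain ⟨u', hu'⟩ := exists_map_eq (letters_range_fst hpad)
        obtain ⟨v', hv'⟩ := exists_map_eq (letters_range_snd hpad)
        subst hu' hv'
        refine ⟨u', hu, v', hv, ?_, ?_⟩
        · apply List.map_injective_iff.mpr hginj
          rw [hpad, padMap_map]
        · apply hvalinj2
          rw [← evalWord_map_val, ← evalWord_map_val]
          exact he
    refine (congrArg Language.IsRegular hset).mpr ?_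
    exact isRegular_comap _ h.eq_regular
  · -- mul_regular
    intro b
    have hset : {p : List (Option {a : A // ψ a ∈ fpLeftFactor S₁ S₂} ×
        Option {a : A // ψ a ∈ fpLeftFactor S₁ S₂}) |
        ∃ u ∈ {w : List {a : A // ψ a ∈ fpLeftFactor S₁ S₂} | w.map Subtype.val ∈ L},
        ∃ v ∈ {w : List {a : A // ψ a ∈ fpLeftFactor S₁ S₂} | w.map Subtype.val ∈ L},
          p = padMap u v ∧
          evalWord (fun b : {a : A // ψ a ∈ fpLeftFactor S₁ S₂} =>
            (⟨ψ b.1, b.2⟩ : fpLeftFactor S₁ S₂)) (u ++ [b]) =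
          evalWord (fun b : {a : A // ψ a ∈ fpLeftFactor S₁ S₂} =>
            (⟨ψ b.1, b.2⟩ : fpLeftFactor S₁ S₂)) v}
        = {p | p.map (Prod.map (Option.map Subtype.val) (Option.map Subtype.val)) ∈
            {q : List (Option A × Option A) | ∃ u ∈ L, ∃ v ∈ L, q = padMap u v ∧
              evalWord ψ (u ++ [b.val]) = evalWord ψ v}} := by
      ext p
      constructor
      · rintro ⟨u, hu, v, hv, rfl, he⟩
        refine ⟨u.map Subtype.val, hu, v.map Subtype.val, hv, (padMap_map _ u v).symm, ?_⟩
        rw [show (u.map Subtype.val) ++ [b.val] = (u ++ [b]).map Subtype.val by simp,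
          evalWord_map_val, evalWord_map_val, he]
      · rintro ⟨u, hu, v, hv, hpad, he⟩
        obtain ⟨u', hu'⟩ := exists_map_eq (letters_range_fst hpad)
        obtain ⟨v', hv'⟩ := exists_map_eq (letters_range_snd hpad)
        subst hu' hv'
        refine ⟨u', hu, v', hv, ?_, ?_⟩
        · apply List.map_injective_iff.mpr hginj
          rw [hpad, padMap_map]
        · apply hvalinj2
          rw [← evalWord_map_val, ← evalWord_map_val]
          simpa using he
    refine (congrArg Language.IsRegular hset).mpr ?_
    exact isRegular_comap _ (h.mul_regular b.val)
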